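/- arXiv:2306.13258 — 10 statements merged into one kernel-verified Lean document; each statement's English description precedes it below -/
import Mathlib

section
/- Let G be a simple graph, k a positive integer, and P a k-plex of G with |P| ≥ 2k - 1. Then for any two distinct vertices u, w ∈ P that are not adjacent in G, there exists a vertex x ∈ P that is adjacent to both u and w. In particular, any two distinct vertices of P are at distance at most 2 in the induced subgraph G[P]. -/
open scoped Classical

/-- A `k`-plex of a simple graph `G` is a finite vertex set `P` such that every
vertex `v ∈ P` has at least `|P| - k` neighbors inside `P`. -/
def IsKPlex {V : Type*} (G : SimpleGraph V) (k : ℕ) (P : Finset V) : Prop :=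
  ∀ v ∈ P, P.card - k ≤ (P.filter (fun u => G.Adj v u)).card

/-- In a `k`-plex `P` with `|P| ≥ 2k - 1`, any two distinct non-adjacent vertices of `P`
have a common neighbor inside `P`; in particular any two distinct vertices of `P` are at
distance at most `2` in the induced subgraph `G[P]`. -/
theorem kplex_common_neighbor_and_dist_le_two {V : Type*} (G : SimpleGraph V)
    (k : ℕ) (hk : 0 < k) (P : Finset V) (hP : IsKPlex G k P)
    (hcard : 2 * k - 1 ≤ P.card) :
    (∀ u ∈ P, ∀ w ∈ P, u ≠ w → ¬ G.Adj u w → ∃ x ∈ P, G.Adj u x ∧ G.Adj w x) ∧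
    (∀ u w : (↑P : Set V), u ≠ w → (G.induce (↑P : Set V)).dist u w ≤ 2) := by
  have key : ∀ u ∈ P, ∀ w ∈ P, u ≠ w → ¬ G.Adj u w →
      ∃ x ∈ P, G.Adj u x ∧ G.Adj w x := by
    intro u hu w hw huw hadj
    set A := P.filter (fun x => G.Adj u x) with hA
    set B := P.filter (fun x => G.Adj w x) with hB
    have hAcard : P.card - k ≤ A.card := hP u hu
    have hBcard : P.card - k ≤ B.card := hP w hw
    have hsub : A ∪ B ⊆ (P.erase u).erase w := by
      intro x hx
      rcases Finset.mem_union.mp hx with h | h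
      · rcases Finset.mem_filter.mp h with ⟨hxP, hadjux⟩
        refine Finset.mem_erase.mpr ⟨?_, Finset.mem_erase.mpr ⟨?_, hxP⟩⟩
        · rintro rfl; exact hadj hadjux
        · rintro rfl; exact G.irrefl hadjux
      · rcases Finset.mem_filter.mp h with ⟨hxP, hadjwx⟩
        refine Finset.mem_erase.mpr ⟨?_, Finset.mem_erase.mpr ⟨?_, hxP⟩⟩
        · rintro rfl; exact G.irrefl hadjwx
        · rintro rfl; exact hadj hadjwx.symm
    have hwerase : w ∈ P.erase u := Finset.mem_erase.mpr ⟨huw.symm, hw⟩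
    have hec : ((P.erase u).erase w).card = P.card - 2 := by
      rw [Finset.card_erase_of_mem hwerase, Finset.card_erase_of_mem hu]; omega
    have hP2 : 2 ≤ P.card := by
      have : ({u, w} : Finset V) ⊆ P := by
        intro x hx
        rcases Finset.mem_insert.mp hx with rfl | hx
        · exact hu
        · rw [Finset.mem_singleton.mp hx]; exact hw
      have := Finset.card_le_card this
      rwa [Finset.card_pair huw] at this
    have hun : (A ∪ B).card ≤ P.card - 2 := hec ▸ Finset.card_le_card hsub
    have hie : A.card + B.card = (A ∪ B).card + (A ∩ B).card :=
      (Finset.card_union_add_card_inter A B).symm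
    have hpos : 0 < (A ∩ B).card := by omega
    obtain ⟨x, hx⟩ := Finset.card_pos.mp hpos
    rcases Finset.mem_inter.mp hx with ⟨hxA, hxB⟩
    rcases Finset.mem_filter.mp hxA with ⟨hxP, h1⟩
    rcases Finset.mem_filter.mp hxB with ⟨_, h2⟩
    exact ⟨x, hxP, h1, h2⟩
  refine ⟨key, ?_⟩
  intro u w huw
  by_cases hadj : G.Adj (u : V) (w : V)
  · have h : (G.induce (↑P : Set V)).Adj u w := hadj
    have := SimpleGraph.dist_le (SimpleGraph.Walk.cons h SimpleGraph.Walk.nil)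
    simp only [SimpleGraph.Walk.length_cons, SimpleGraph.Walk.length_nil] at this
    omega
  · have hne : (u : V) ≠ (w : V) := fun h => huw (Subtype.coe_injective h)
    obtain ⟨x, hxP, h1, h2⟩ := key u u.2 w w.2 hne hadj
    have h1' : (G.induce (↑P : Set V)).Adj u ⟨x, hxP⟩ := h1
    have h2' : (G.induce (↑P : Set V)).Adj ⟨x, hxP⟩ w := h2.symm
    have := SimpleGraph.dist_le
      (SimpleGraph.Walk.cons h1' (SimpleGraph.Walk.cons h2' SimpleGraph.Walk.nil))
    simpa using this
end

section
/- Let G be a simple graph, k a positive integer, and P a k-plex of G with |P| ≥ 2k - 1. Then the induced subgraph G[P] is connected. -/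
open scoped Classical

/-- If `P` is a `k`-plex with `|P| ≥ 2k - 1`, then the induced subgraph `G[P]`
is connected. -/
theorem kplex_induce_connected {V : Type*} (G : SimpleGraph V)
    (k : ℕ) (hk : 0 < k) (P : Finset V) (hP : IsKPlex G k P)
    (hcard : 2 * k - 1 ≤ P.card) :
    (G.induce (↑P : Set V)).Connected := by
  have hPk : k ≤ P.card := by omega
  have hPne : P.Nonempty := Finset.card_pos.mp (by omega)
  have key : ∀ a b, a ∈ P → b ∈ P → a ≠ b → ¬ G.Adj a b →
      ∃ w ∈ P, G.Adj a w ∧ G.Adj b w := by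
    intro a b ha hb hab hnadj
    set A := P.filter (fun u => G.Adj a u) with hA
    set B := P.filter (fun u => G.Adj b u) with hB
    have hAc : P.card - k ≤ A.card := by rw [hA]; exact hP a ha
    have hBc : P.card - k ≤ B.card := by rw [hB]; exact hP b hb
    have hsub : A ∪ B ⊆ (P.erase a).erase b := by
      intro x hx
      rcases Finset.mem_union.mp hx with hx | hx
      · rcases Finset.mem_filter.mp hx with ⟨hxP, hadj⟩
        refine Finset.mem_erase.mpr ⟨?_, Finset.mem_erase.mpr ⟨?_, hxP⟩⟩
        · rintro rfl; exact hnadj hadj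
        · rintro rfl; exact G.loopless.irrefl _ hadj
      · rcases Finset.mem_filter.mp hx with ⟨hxP, hadj⟩
        refine Finset.mem_erase.mpr ⟨?_, Finset.mem_erase.mpr ⟨?_, hxP⟩⟩
        · rintro rfl; exact G.loopless.irrefl _ hadj
        · rintro rfl; exact hnadj hadj.symm
    have hU : (A ∪ B).card ≤ P.card - 2 := by
      calc (A ∪ B).card ≤ ((P.erase a).erase b).card := Finset.card_le_card hsub
        _ = P.card - 2 := by
            rw [Finset.card_erase_of_mem (Finset.mem_erase.mpr ⟨hab.symm, hb⟩),
              Finset.card_erase_of_mem ha]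
            omega
    have hsum : (A ∪ B).card + (A ∩ B).card = A.card + B.card :=
      Finset.card_union_add_card_inter A B
    have hint : 0 < (A ∩ B).card := by
      have h2 : 2 ≤ P.card := Finset.one_lt_card.mpr ⟨a, ha, b, hb, hab⟩
      clear_value A B
      generalize hu : (A ∪ B).card = u at hU hsum
      generalize hi : (A ∩ B).card = i at hsum ⊢
      generalize ha' : A.card = a' at hAc hsum
      generalize hb' : B.card = b' at hBc hsum
      omega
    obtain ⟨w, hw⟩ := Finset.card_pos.mp hint
    rcases Finset.mem_inter.mp hw with ⟨hwA, hwB⟩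
    exact ⟨w, (Finset.mem_filter.mp hwA).1, (Finset.mem_filter.mp hwA).2,
      (Finset.mem_filter.mp hwB).2⟩
  have hne : Nonempty (↑(↑P : Set V)) := ⟨⟨hPne.choose, hPne.choose_spec⟩⟩
  rw [SimpleGraph.connected_iff]
  refine ⟨?_, hne⟩
  · rintro ⟨u, hu⟩ ⟨v, hv⟩
    by_cases huv : u = v
    · subst huv; rfl
    by_cases hadj : G.Adj u v
    · exact SimpleGraph.Adj.reachable (hadj)
    · obtain ⟨w, hw, haw, hbw⟩ := key u v hu hv huv hadj
      have h1 : (G.induce (↑P : Set V)).Adj ⟨u, hu⟩ ⟨w, hw⟩ := haw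
      have h2 : (G.induce (↑P : Set V)).Adj ⟨w, hw⟩ ⟨v, hv⟩ := hbw.symm
      exact h1.reachable.trans h2.reachable
end

section
/- Let G be a simple graph on a linearly ordered vertex set, k a positive integer, and P a k-plex of G with |P| ≥ 2k - 1. Let v be the least vertex of P with respect to the linear order. Then P ⊆ {v} ∪ N_G^+(v) ∪ N_G^{2+}(v), where N_G^+(v) is the set of neighbors of v that are greater than v and N_G^{2+}(v) is the set of 2-hop neighbors of v that are greater than v; moreover |N_G^2(v) ∩ P| ≤ k - 1, where N_G^2(v) denotes the 2-hop neighbors of v. -/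
open scoped Classical

/-- The 2-hop neighbors of `v` in `G`:
`N_G²(v) = (⋃_{u ∈ N_G(v)} N_G(u)) \ (N_G(v) ∪ {v})`. -/
def twoHop {V : Type*} (G : SimpleGraph V) (v : V) : Set V :=
  (⋃ u ∈ G.neighborSet v, G.neighborSet u) \ (G.neighborSet v ∪ {v})

/-- If `P` is a `k`-plex with `|P| ≥ 2k - 1` whose least vertex (w.r.t. the linear
order on the vertices) is `v`, then `P ⊆ {v} ∪ N_G⁺(v) ∪ N_G^{2+}(v)` and moreover
`|N_G²(v) ∩ P| ≤ k - 1`. -/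
theorem kplex_split_by_least_vertex {V : Type*} [LinearOrder V] (G : SimpleGraph V)
    (k : ℕ) (hk : 0 < k) (P : Finset V) (hP : IsKPlex G k P)
    (hcard : 2 * k - 1 ≤ P.card)
    (v : V) (hv : v ∈ P) (hmin : ∀ w ∈ P, v ≤ w) :
    (↑P : Set V) ⊆ {v} ∪ {w | G.Adj v w ∧ v < w} ∪ {w | w ∈ twoHop G v ∧ v < w} ∧
    (P.filter (fun w => w ∈ twoHop G v)).card ≤ k - 1 := by
  have h1 := hP v hv
  constructor
  · intro w hw
    simp only [Set.mem_union, Set.mem_setOf_eq, Set.mem_singleton_iff] at *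
    rcases eq_or_ne w v with rfl | hne
    · exact Or.inl (Or.inl rfl)
    have hvw : v < w := lt_of_le_of_ne (hmin w hw) (Ne.symm hne)
    by_cases hadj : G.Adj v w
    · exact Or.inl (Or.inr ⟨hadj, hvw⟩)
    · refine Or.inr ⟨?_, hvw⟩
      have h2 := hP w hw
      set A := P.filter (fun u => G.Adj v u) with hA
      set B := P.filter (fun u => G.Adj w u) with hB
      have hsub : A ∪ B ⊆ (P.erase v).erase w := by
        intro u hu
        rcases Finset.mem_union.mp hu with hu | hu
        · rcases Finset.mem_filter.mp hu with ⟨huP, hadjv⟩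
          refine Finset.mem_erase.mpr ⟨?_, Finset.mem_erase.mpr ⟨?_, huP⟩⟩
          · rintro rfl; exact hadj hadjv
          · rintro rfl; exact G.irrefl hadjv
        · rcases Finset.mem_filter.mp hu with ⟨huP, hadjw⟩
          refine Finset.mem_erase.mpr ⟨?_, Finset.mem_erase.mpr ⟨?_, huP⟩⟩
          · rintro rfl; exact G.irrefl hadjw
          · rintro rfl; exact hadj hadjw.symm
      have hne2 : ¬ Disjoint A B := by
        intro hd
        have hcub : (A ∪ B).card = A.card + B.card := Finset.card_union_of_disjoint hd
        have hle : (A ∪ B).card ≤ ((P.erase v).erase w).card := Finset.card_le_card hsub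
        have hec : ((P.erase v).erase w).card ≤ P.card - 2 := by
          have hwv : w ∈ P.erase v := Finset.mem_erase.mpr ⟨hne, hw⟩
          rw [Finset.card_erase_of_mem hwv, Finset.card_erase_of_mem hv]
          omega
        have hA1 : P.card - k ≤ A.card := h1
        have h2c : 1 < P.card := Finset.one_lt_card.mpr ⟨v, hv, w, hw, Ne.symm hne⟩
        omega
      rcases Finset.not_disjoint_iff.mp hne2 with ⟨u, huA, huB⟩
      rcases Finset.mem_filter.mp huA with ⟨-, hadjv⟩
      rcases Finset.mem_filter.mp huB with ⟨-, hadjw⟩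
      constructor
      · simp only [Set.mem_iUnion, SimpleGraph.mem_neighborSet]
        exact ⟨u, hadjv, hadjw.symm⟩
      · simp only [Set.mem_union, SimpleGraph.mem_neighborSet, Set.mem_singleton_iff]
        push_neg
        exact ⟨hadj, hne⟩
  · set A := P.filter (fun u => G.Adj v u) with hA
    set T := P.filter (fun w => w ∈ twoHop G v) with hT
    have hdisj : Disjoint T (insert v A) := by
      rw [Finset.disjoint_left]
      intro u huT huI
      rcases Finset.mem_filter.mp huT with ⟨huP, hu2⟩
      have hnot : u ∉ G.neighborSet v ∪ {v} := hu2.2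
      rcases Finset.mem_insert.mp huI with rfl | huA
      · exact hnot (Or.inr rfl)
      · exact hnot (Or.inl (Finset.mem_filter.mp huA).2)
    have hsub : T ∪ insert v A ⊆ P := by
      intro u hu
      rcases Finset.mem_union.mp hu with hu | hu
      · exact (Finset.mem_filter.mp hu).1
      · rcases Finset.mem_insert.mp hu with rfl | hu
        · exact hv
        · exact (Finset.mem_filter.mp hu).1
    have hvA : v ∉ A := by
      intro h; exact G.irrefl (Finset.mem_filter.mp h).2
    have hcardI : (insert v A).card = A.card + 1 := Finset.card_insert_of_notMem hvA
    have := Finset.card_le_card hsub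
    rw [Finset.card_union_of_disjoint hdisj, hcardI] at this
    omega
end

section
/- Let G be a simple graph and c a nonnegative integer such that every nonempty set F of edges of G contains an edge e = {u, v} whose endpoints have at most c common neighbors w with {u, w} ∈ F and {v, w} ∈ F (i.e., G is c-community-degenerate). Then for every positive integer k, every k-plex P of G with |P| ≥ 2k - 1 satisfies |P| ≤ c + 2k. -/
open scoped Classical

/-- If `G` is `c`-community-degenerate (every nonempty finite set `F` of edges of `G`
contains an edge `{u, v}` such that at most `c` vertices `w` satisfy both
`{u, w} ∈ F` and `{v, w} ∈ F`), then for every positive integer `k`, every `k`-plex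
`P` of `G` with `|P| ≥ 2k - 1` satisfies `|P| ≤ c + 2k`. -/
theorem kplex_card_le_community_degeneracy_add_two_k {V : Type*} [Fintype V]
    (G : SimpleGraph V) (c : ℕ)
    (hcd : ∀ F : Finset (Sym2 V), F ⊆ G.edgeFinset → F.Nonempty →
      ∃ u v : V, s(u, v) ∈ F ∧
        (Finset.univ.filter (fun w => s(u, w) ∈ F ∧ s(v, w) ∈ F)).card ≤ c) :
    ∀ k : ℕ, 0 < k → ∀ P : Finset V, IsKPlex G k P → 2 * k - 1 ≤ P.card →
      P.card ≤ c + 2 * k := by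
  intro k hk P hP _hcard
  by_cases hbig : P.card ≤ 2 * k
  · omega
  push_neg at hbig
  -- F : edges of G with both endpoints in P
  set F : Finset (Sym2 V) := G.edgeFinset.filter (fun e => ∀ x ∈ e, x ∈ P) with hF
  have hFsub : F ⊆ G.edgeFinset := Finset.filter_subset _ _
  have hmemF : ∀ a b : V, s(a, b) ∈ F ↔ G.Adj a b ∧ a ∈ P ∧ b ∈ P := by
    intro a b
    simp only [hF, Finset.mem_filter, SimpleGraph.mem_edgeFinset,
      SimpleGraph.mem_edgeSet, Sym2.mem_iff]
    constructor
    · rintro ⟨h1, h2⟩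
      exact ⟨h1, h2 a (Or.inl rfl), h2 b (Or.inr rfl)⟩
    · rintro ⟨h1, h2, h3⟩
      refine ⟨h1, ?_⟩
      rintro x (rfl | rfl) <;> assumption
  -- F is nonempty
  have hFne : F.Nonempty := by
    obtain ⟨v, hv⟩ : P.Nonempty := Finset.card_pos.mp (by omega)
    have hdeg := hP v hv
    have : (P.filter (fun u => G.Adj v u)).Nonempty := by
      apply Finset.card_pos.mp; omega
    obtain ⟨u, hu⟩ := this
    rw [Finset.mem_filter] at hu
    exact ⟨s(v, u), (hmemF v u).mpr ⟨hu.2, hv, hu.1⟩⟩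
  obtain ⟨u, v, huv, hc⟩ := hcd F hFsub hFne
  obtain ⟨hadj, huP, hvP⟩ := (hmemF u v).mp huv
  -- common neighbors in P
  set A : Finset V := P.filter (fun w => G.Adj u w ∧ G.Adj v w) with hA
  have hAc : A.card ≤ c := by
    refine le_trans (Finset.card_le_card ?_) hc
    intro w hw
    rw [hA, Finset.mem_filter] at hw
    simp only [Finset.mem_filter, Finset.mem_univ, true_and]
    exact ⟨(hmemF u w).mpr ⟨hw.2.1, huP, hw.1⟩, (hmemF v w).mpr ⟨hw.2.2, hvP, hw.1⟩⟩
  set Bu : Finset V := P \ P.filter (fun w => G.Adj u w) with hBu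
  set Bv : Finset V := P \ P.filter (fun w => G.Adj v w) with hBv
  have hBuc : Bu.card ≤ k := by
    have h1 := hP u huP
    have h2 : (P.filter (fun w => G.Adj u w)).card ≤ P.card :=
      Finset.card_le_card (Finset.filter_subset _ _)
    rw [hBu, Finset.card_sdiff_of_subset (Finset.filter_subset _ _)]
    omega
  have hBvc : Bv.card ≤ k := by
    have h1 := hP v hvP
    have h2 : (P.filter (fun w => G.Adj v w)).card ≤ P.card :=
      Finset.card_le_card (Finset.filter_subset _ _)
    rw [hBv, Finset.card_sdiff_of_subset (Finset.filter_subset _ _)]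
    omega
  have hcover : P ⊆ A ∪ Bu ∪ Bv := by
    intro w hw
    simp only [hA, hBu, hBv, Finset.mem_union, Finset.mem_filter, Finset.mem_sdiff]
    by_cases h1 : G.Adj u w
    · by_cases h2 : G.Adj v w
      · exact Or.inl (Or.inl ⟨hw, h1, h2⟩)
      · exact Or.inr ⟨hw, fun h => h2 h.2⟩
    · exact Or.inl (Or.inr ⟨hw, fun h => h1 h.2⟩)
  calc P.card ≤ (A ∪ Bu ∪ Bv).card := Finset.card_le_card hcover
    _ ≤ A.card + Bu.card + Bv.card := by
        refine le_trans (Finset.card_union_le _ _) ?_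
        exact Nat.add_le_add_right (Finset.card_union_le _ _) _
    _ ≤ c + 2 * k := by omega
end

section
/- Let G be a simple graph, k a positive integer, p an integer, and u, v two distinct adjacent vertices of G with |N_G(u) ∩ N_G(v)| < p - 2k. Then there is no k-plex of G of size at least p containing both u and v. -/
open scoped Classical

/-- If `u` and `v` are distinct adjacent vertices with `|N_G(u) ∩ N_G(v)| < p - 2k`,
then no `k`-plex of size at least `p` contains both `u` and `v`. -/
theorem not_both_mem_kplex_of_adj_few_common_neighbors {V : Type*} [Fintype V]
    (G : SimpleGraph V) (k : ℕ) (hk : 0 < k) (p : ℤ) (u v : V)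
    (hne : u ≠ v) (hadj : G.Adj u v)
    (hcommon : ((G.neighborFinset u ∩ G.neighborFinset v).card : ℤ) < p - 2 * k) :
    ¬ ∃ P : Finset V, IsKPlex G k P ∧ p ≤ (P.card : ℤ) ∧ u ∈ P ∧ v ∈ P := by
  rintro ⟨P, hP, hp, hu, hv⟩
  set A := P.filter (fun w => G.Adj u w) with hAdef
  set B := P.filter (fun w => G.Adj v w) with hBdef
  have hA : P.card - k ≤ A.card := hP u hu
  have hB : P.card - k ≤ B.card := hP v hv
  have hAB : A ∩ B ⊆ G.neighborFinset u ∩ G.neighborFinset v := by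
    intro w hw
    simp only [hAdef, hBdef, Finset.mem_inter, Finset.mem_filter,
      SimpleGraph.mem_neighborFinset] at *
    exact ⟨hw.1.2, hw.2.2⟩
  have hunion : (A ∪ B).card ≤ P.card := Finset.card_le_card (by
    intro w hw
    rcases Finset.mem_union.1 hw with h | h <;> exact (Finset.mem_filter.1 h).1)
  have hcard : (A ∪ B).card + (A ∩ B).card = A.card + B.card :=
    Finset.card_union_add_card_inter A B
  have hle : (A ∩ B).card ≤ (G.neighborFinset u ∩ G.neighborFinset v).card :=
    Finset.card_le_card hAB
  omega
end

section
/- Let G be a simple graph, k a positive integer, p an integer, and u, v two distinct non-adjacent vertices of G with |N_G(u) ∩ N_G(v)| < p - 2k + 2. Then there is no k-plex of G of size at least p containing both u and v. -/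
open scoped Classical

/-- If `u` and `v` are distinct non-adjacent vertices with
`|N_G(u) ∩ N_G(v)| < p - 2k + 2`, then no `k`-plex of size at least `p`
contains both `u` and `v`. -/
theorem not_both_mem_kplex_of_nonadj_few_common_neighbors {V : Type*} [Fintype V]
    (G : SimpleGraph V) (k : ℕ) (hk : 0 < k) (p : ℤ) (u v : V)
    (hne : u ≠ v) (hnadj : ¬ G.Adj u v)
    (hcommon : ((G.neighborFinset u ∩ G.neighborFinset v).card : ℤ) < p - 2 * k + 2) :
    ¬ ∃ P : Finset V, IsKPlex G k P ∧ p ≤ (P.card : ℤ) ∧ u ∈ P ∧ v ∈ P := by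
  rintro ⟨P, hplex, hP, hu, hv⟩
  set A := P.filter (fun x => G.Adj u x) with hA
  set B := P.filter (fun x => G.Adj v x) with hB
  have h1 : P.card - k ≤ A.card := hplex u hu
  have h2 : P.card - k ≤ B.card := hplex v hv
  -- A ∪ B avoids u and v
  have hsub : A ∪ B ⊆ P \ {u, v} := by
    intro x hx
    simp only [Finset.mem_union, hA, hB, Finset.mem_filter] at hx
    simp only [Finset.mem_sdiff, Finset.mem_insert, Finset.mem_singleton]
    rcases hx with ⟨hxP, hadj⟩ | ⟨hxP, hadj⟩
    · refine ⟨hxP, ?_⟩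
      rintro (rfl | rfl)
      · exact G.irrefl hadj
      · exact hnadj hadj
    · refine ⟨hxP, ?_⟩
      rintro (rfl | rfl)
      · exact hnadj hadj.symm
      · exact G.irrefl hadj
  have huv : ({u, v} : Finset V) ⊆ P := by
    intro x hx
    simp only [Finset.mem_insert, Finset.mem_singleton] at hx
    rcases hx with rfl | rfl <;> assumption
  have hcard2 : ({u, v} : Finset V).card = 2 := Finset.card_pair hne
  have hsd : (P \ {u, v}).card = P.card - 2 := by
    rw [Finset.card_sdiff_of_subset huv, hcard2]
  have h2P : 2 ≤ P.card := by
    calc 2 = ({u, v} : Finset V).card := hcard2.symm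
    _ ≤ P.card := Finset.card_le_card huv
  have hun : (A ∪ B).card ≤ P.card - 2 := by
    rw [← hsd]; exact Finset.card_le_card hsub
  have hinter : (A ∪ B).card + (A ∩ B).card = A.card + B.card :=
    Finset.card_union_add_card_inter A B
  have hABsub : A ∩ B ⊆ G.neighborFinset u ∩ G.neighborFinset v := by
    intro x hx
    simp only [hA, hB, Finset.mem_inter, Finset.mem_filter] at hx
    simp only [Finset.mem_inter, SimpleGraph.mem_neighborFinset]
    exact ⟨hx.1.2, hx.2.2⟩
  have hABcard : (A ∩ B).card ≤ (G.neighborFinset u ∩ G.neighborFinset v).card :=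
    Finset.card_le_card hABsub
  omega
end

section
/- Let G be a simple graph, k a positive integer, p an integer, and P a finite vertex set of G with n = |P| and λ the number of edges of the induced subgraph G[P]. If P is contained in some k-plex P* of G with |P*| ≥ p, then the number of vertices outside P that are adjacent to every vertex of P is at least p - n·k + n(n-1) - 2λ. -/
open scoped Classical

lemma my_handshake {V : Type*} [Fintype V] (G : SimpleGraph V) (P : Finset V) :
    ∑ v ∈ P, (P.filter (fun u => G.Adj v u)).card
      = 2 * (G.edgeFinset.filter (fun e => ∀ x ∈ e, x ∈ P)).card := by
  classical
  let H : SimpleGraph V :=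
    { Adj := fun a b => G.Adj a b ∧ a ∈ P ∧ b ∈ P
      symm := ⟨by intro a b h; exact ⟨h.1.symm, h.2.2, h.2.1⟩⟩
      loopless := ⟨by intro a h; exact G.loopless.irrefl a h.1⟩ }
  have hedge : H.edgeFinset = G.edgeFinset.filter (fun e => ∀ x ∈ e, x ∈ P) := by
    ext e
    induction e using Sym2.ind with
    | _ a b =>
      simp only [SimpleGraph.mem_edgeFinset, SimpleGraph.mem_edgeSet,
        Finset.mem_filter, Sym2.mem_iff]
      constructor
      · rintro ⟨h, ha, hb⟩
        exact ⟨h, by rintro x (rfl | rfl) <;> assumption⟩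
      · rintro ⟨h, hx⟩
        exact ⟨h, hx a (Or.inl rfl), hx b (Or.inr rfl)⟩
  have hsum : ∑ v, H.degree v = 2 * H.edgeFinset.card :=
    H.sum_degrees_eq_twice_card_edges
  have hdeg : ∀ v ∈ P, H.degree v = (P.filter (fun u => G.Adj v u)).card := by
    intro v hv
    rw [SimpleGraph.degree, SimpleGraph.neighborFinset_eq_filter]
    congr 1
    ext u
    simp only [Finset.mem_filter, Finset.mem_univ, true_and]
    constructor
    · rintro ⟨h, _, hu⟩; exact ⟨hu, h⟩
    · rintro ⟨hu, h⟩; exact ⟨h, hv, hu⟩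
  have hsum2 : ∑ v, H.degree v = ∑ v ∈ P, (P.filter (fun u => G.Adj v u)).card := by
    rw [← Finset.sum_subset (Finset.subset_univ P)]
    · exact Finset.sum_congr rfl hdeg
    · intro v _ hv
      rw [SimpleGraph.degree, SimpleGraph.neighborFinset_eq_filter]
      apply Finset.card_eq_zero.mpr
      apply Finset.filter_eq_empty_iff.mpr
      rintro u _ ⟨_, hvP, _⟩
      exact hv hvP
  rw [← hsum2, hsum, hedge]

/-- Higher-order reduction: if a vertex set `P` with `n = |P|` and `λ = |E(G[P])|`
is contained in a `k`-plex of size at least `p`, then the number of vertices outside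
`P` adjacent to every vertex of `P` is at least `p - n·k + n(n-1) - 2λ`. -/
theorem common_neighborhood_lower_bound {V : Type*} [Fintype V]
    (G : SimpleGraph V) (k : ℕ) (hk : 0 < k) (p : ℤ)
    (P : Finset V) (n lam : ℕ)
    (hn : n = P.card)
    (hlam : lam = (G.edgeFinset.filter (fun e => ∀ x ∈ e, x ∈ P)).card)
    (Pstar : Finset V) (hstar : IsKPlex G k Pstar) (hsub : P ⊆ Pstar)
    (hp : p ≤ (Pstar.card : ℤ)) :
    p - (n : ℤ) * (k : ℤ) + (n : ℤ) * ((n : ℤ) - 1) - 2 * (lam : ℤ) ≤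
      ((Finset.univ.filter (fun w => w ∉ P ∧ ∀ u ∈ P, G.Adj u w)).card : ℤ) := by
  classical
  set D : V → ℕ := fun v => (P.filter (fun u => G.Adj v u)).card with hD
  set Out : V → ℕ := fun v => (((Pstar \ P).filter (fun w => ¬ G.Adj v w))).card with hOut
  -- per-vertex bound
  have key : ∀ v ∈ P, (Out v : ℤ) ≤ (k : ℤ) - (n : ℤ) + (D v : ℤ) := by
    intro v hv
    have hvstar : v ∈ Pstar := hsub hv
    -- non-neighbors of v in Pstar, including v, number at most k
    have h1 : (Pstar.filter (fun u => ¬ G.Adj v u)).card ≤ k := by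
      have hplex := hstar v hvstar
      have hpart := Finset.card_filter_add_card_filter_not
        (s := Pstar) (p := fun u => G.Adj v u)
      omega
    have hvmem : v ∈ Pstar.filter (fun u => ¬ G.Adj v u) := by
      simp [hvstar, G.loopless.irrefl v]
    -- the two disjoint pieces inside it
    have hdisj : Disjoint ((Pstar \ P).filter (fun w => ¬ G.Adj v w))
        ((P.filter (fun u => ¬ G.Adj v u)).erase v) := by
      apply Finset.disjoint_left.mpr
      intro w hw1 hw2
      have hw1' := Finset.mem_sdiff.mp (Finset.mem_filter.mp hw1).1
      have hw2' := Finset.mem_filter.mp (Finset.mem_of_mem_erase hw2)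
      exact hw1'.2 hw2'.1
    have hAB : Out v + ((P.filter (fun u => ¬ G.Adj v u)).erase v).card
        ≤ ((Pstar.filter (fun u => ¬ G.Adj v u)).erase v).card := by
      rw [hOut, ← Finset.card_union_of_disjoint hdisj]
      apply Finset.card_le_card
      intro w hw
      rcases Finset.mem_union.mp hw with hw | hw
      · rcases Finset.mem_filter.mp hw with ⟨hw1, hw2⟩
        rcases Finset.mem_sdiff.mp hw1 with ⟨hws, hwP⟩
        refine Finset.mem_erase.mpr ⟨?_, Finset.mem_filter.mpr ⟨hws, hw2⟩⟩
        rintro rfl; exact hwP hv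
      · rcases Finset.mem_erase.mp hw with ⟨hne, hw⟩
        rcases Finset.mem_filter.mp hw with ⟨hwP, hwa⟩
        exact Finset.mem_erase.mpr ⟨hne, Finset.mem_filter.mpr ⟨hsub hwP, hwa⟩⟩
    have hvP : v ∈ P.filter (fun u => ¬ G.Adj v u) := by
      simp [hv, G.loopless.irrefl v]
    have hcard1 : ((P.filter (fun u => ¬ G.Adj v u)).erase v).card
        = (P.filter (fun u => ¬ G.Adj v u)).card - 1 := Finset.card_erase_of_mem hvP
    have hcard2 : ((Pstar.filter (fun u => ¬ G.Adj v u)).erase v).card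
        = (Pstar.filter (fun u => ¬ G.Adj v u)).card - 1 := Finset.card_erase_of_mem hvmem
    have hcard3 : D v + (P.filter (fun u => ¬ G.Adj v u)).card = P.card :=
      Finset.card_filter_add_card_filter_not (s := P) (p := fun u => G.Adj v u)
    have h4 : 1 ≤ (P.filter (fun u => ¬ G.Adj v u)).card := Finset.card_pos.mpr ⟨v, hvP⟩
    have h5 : 1 ≤ (Pstar.filter (fun u => ¬ G.Adj v u)).card := Finset.card_pos.mpr ⟨v, hvmem⟩
    have : Out v + (P.card - D v - 1) ≤ k - 1 := by omega
    have hDn : D v + 1 ≤ P.card := by omega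
    subst hn
    omega
  -- sum the bound
  have hsumD : ∑ v ∈ P, D v = 2 * lam := by rw [hlam]; exact my_handshake G P
  have hsumOut : ((∑ v ∈ P, Out v : ℕ) : ℤ)
      ≤ (n : ℤ) * (k : ℤ) - (n : ℤ) * (n : ℤ) + 2 * (lam : ℤ) := by
    push_cast
    calc (∑ v ∈ P, (Out v : ℤ)) ≤ ∑ v ∈ P, ((k : ℤ) - (n : ℤ) + (D v : ℤ)) :=
          Finset.sum_le_sum key
      _ = P.card * ((k : ℤ) - (n : ℤ)) + ∑ v ∈ P, (D v : ℤ) := by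
          rw [Finset.sum_add_distrib, Finset.sum_const, nsmul_eq_mul]
      _ = (n : ℤ) * (k : ℤ) - (n : ℤ) * (n : ℤ) + 2 * (lam : ℤ) := by
          have : (∑ v ∈ P, (D v : ℤ)) = 2 * (lam : ℤ) := by
            exact_mod_cast congrArg (Nat.cast : ℕ → ℤ) hsumD
          rw [this, ← hn]; ring
  -- bad vertices
  set Bad : Finset V := (Pstar \ P).filter (fun w => ∃ v ∈ P, ¬ G.Adj v w) with hBad
  have hBadle : Bad.card ≤ ∑ v ∈ P, Out v := by
    refine le_trans (Finset.card_le_card ?_) (Finset.card_biUnion_le)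
    intro w hw
    rcases Finset.mem_filter.mp hw with ⟨hw1, v, hv, hvw⟩
    exact Finset.mem_biUnion.mpr ⟨v, hv, Finset.mem_filter.mpr ⟨hw1, hvw⟩⟩
  have hBadsub : Bad ⊆ Pstar \ P := Finset.filter_subset _ _
  have hgood : (Pstar \ P) \ Bad ⊆
      Finset.univ.filter (fun w => w ∉ P ∧ ∀ u ∈ P, G.Adj u w) := by
    intro w hw
    rcases Finset.mem_sdiff.mp hw with ⟨hw1, hw2⟩
    rcases Finset.mem_sdiff.mp hw1 with ⟨hws, hwP⟩
    refine Finset.mem_filter.mpr ⟨Finset.mem_univ _, hwP, ?_⟩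
    intro u hu
    by_contra hna
    exact hw2 (Finset.mem_filter.mpr ⟨hw1, u, hu, hna⟩)
  have hcard_good : (Pstar \ P).card - Bad.card
      ≤ (Finset.univ.filter (fun w => w ∉ P ∧ ∀ u ∈ P, G.Adj u w)).card := by
    rw [← Finset.card_sdiff_of_subset hBadsub]
    exact Finset.card_le_card hgood
  have hsd : (Pstar \ P).card = Pstar.card - P.card := Finset.card_sdiff_of_subset hsub
  have hle : P.card ≤ Pstar.card := Finset.card_le_card hsub
  have hBadcard : (Bad.card : ℤ) ≤ (n : ℤ) * (k : ℤ) - (n : ℤ) * (n : ℤ) + 2 * (lam : ℤ) :=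
    le_trans (by exact_mod_cast hBadle) hsumOut
  have hfinal : ((Pstar.card : ℤ) - (n : ℤ)) - (Bad.card : ℤ)
      ≤ ((Finset.univ.filter (fun w => w ∉ P ∧ ∀ u ∈ P, G.Adj u w)).card : ℤ) := by
    have hb : Bad.card ≤ (Pstar \ P).card := Finset.card_le_card hBadsub
    have := hcard_good
    omega
  linarith
end

section
/- Let G be a simple graph on a finite vertex set V, d a nonnegative integer, and u a vertex such that every vertex w ∈ {u} ∪ N_G(u) satisfies |N_G(w)| ≤ d. Then for every D ⊆ V such that G \ D is d-degree-bounded, the set D \ {u} also has the property that G \ (D \ {u}) is d-degree-bounded. In particular, if there is a d-bdd set of size at most t, then there is one of size at most t that excludes u. -/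
open scoped Classical

/-- `G \ D` (the induced subgraph on `V \ D`) is `d`-degree-bounded: every vertex
outside `D` has at most `d` neighbors outside `D`. -/
def DegBoundedAfterDeletion {V : Type*} [Fintype V] (G : SimpleGraph V) (d : ℕ)
    (D : Finset V) : Prop :=
  ∀ x ∉ D, ((Finset.univ \ D).filter (fun w => G.Adj x w)).card ≤ d

/-- If every vertex in `{u} ∪ N_G(u)` has degree at most `d` in `G`, then removing `u`
from any `d`-bdd set keeps it a `d`-bdd set; in particular, any `d`-bdd set of size at
most `t` can be replaced by one of size at most `t` excluding `u`. -/
theorem bdd_erase_low_degree_vertex {V : Type*} [Fintype V] [DecidableEq V]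
    (G : SimpleGraph V) (d : ℕ) (u : V)
    (hu : ∀ w ∈ insert u (G.neighborFinset u), G.degree w ≤ d) :
    (∀ D : Finset V, DegBoundedAfterDeletion G d D →
      DegBoundedAfterDeletion G d (D.erase u)) ∧
    (∀ t : ℕ, (∃ D : Finset V, D.card ≤ t ∧ DegBoundedAfterDeletion G d D) →
      ∃ D : Finset V, D.card ≤ t ∧ u ∉ D ∧ DegBoundedAfterDeletion G d D) := by
  have main : ∀ D : Finset V, DegBoundedAfterDeletion G d D →
      DegBoundedAfterDeletion G d (D.erase u) := by
    intro D hD x hx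
    by_cases hxu : x = u ∨ G.Adj x u
    · -- x has degree ≤ d in G, so certainly ≤ d after deletion
      have hdeg : G.degree x ≤ d := by
        apply hu
        rcases hxu with h | h
        · simp [h]
        · simp [G.adj_symm h]
      refine le_trans ?_ hdeg
      rw [← G.card_neighborFinset_eq_degree x]
      apply Finset.card_le_card
      intro w hw
      simp only [Finset.mem_filter] at hw
      simp [SimpleGraph.mem_neighborFinset, hw.2]
    · push_neg at hxu
      obtain ⟨hxu1, hxu2⟩ := hxu
      have hxD : x ∉ D := by
        intro h
        exact hx (Finset.mem_erase.mpr ⟨hxu1, h⟩)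
      refine le_trans (le_of_eq ?_) (hD x hxD)
      congr 1
      ext w
      simp only [Finset.mem_filter, Finset.mem_sdiff, Finset.mem_univ, true_and,
        Finset.mem_erase]
      constructor
      · rintro ⟨hw, ha⟩
        refine ⟨fun hwD => ?_, ha⟩
        have hwu : w ≠ u := fun h => hxu2 (h ▸ ha)
        exact hw ⟨hwu, hwD⟩
      · rintro ⟨hw, ha⟩
        exact ⟨fun h => hw h.2, ha⟩
  refine ⟨main, fun t ⟨D, hcard, hbdd⟩ => ?_⟩
  exact ⟨D.erase u, le_trans (Finset.card_erase_le) hcard, Finset.notMem_erase u D,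
    main D hbdd⟩
end

section
/- Let G be a simple graph on a finite vertex set V, d a nonnegative integer, and C ⊆ V. Write S = V \ C = {v_1, ..., v_q} and δ_i = |S ∩ N_G(v_i)| for 1 ≤ i ≤ q, and assume δ_i ≤ d for all i. Let π_0, π_1, ..., π_q be a partition of C into pairwise disjoint sets with ⋃_{i=0}^{q} π_i = C, π_0 = C \ ⋃_{i=1}^{q} N_G(v_i), and π_i ⊆ C ∩ N_G(v_i) for 1 ≤ i ≤ q. Then every set D ⊆ C such that G \ D is d-degree-bounded satisfies |D| ≥ |C| - |π_0| - Σ_{i=1}^{q} min(d - δ_i, |π_i|). -/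
open scoped Classical

/-- Partition bound for the minimum `d`-bdd problem. With `S = V \ C`,
`δ v = |S ∩ N_G(v)|` for `v ∈ S` (assumed `≤ d`), and a partition
`π₀, (π v)_{v ∈ S}` of `C` with `π₀ = C \ ⋃_{v ∈ S} N_G(v)` and
`π v ⊆ C ∩ N_G(v)`, every `D ⊆ C` such that `G \ D` is `d`-degree-bounded
satisfies `|D| ≥ |C| - |π₀| - Σ_{v ∈ S} min(d - δ v, |π v|)`. -/
theorem partition_bound_for_bdd {V : Type*} [Fintype V] [DecidableEq V]
    (G : SimpleGraph V) (d : ℕ) (C : Finset V)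
    (π₀ : Finset V) (π : V → Finset V)
    (hδ : ∀ v ∈ Finset.univ \ C, ((Finset.univ \ C) ∩ G.neighborFinset v).card ≤ d)
    (hunion : π₀ ∪ (Finset.univ \ C).biUnion π = C)
    (hπ₀ : π₀ = C \ (Finset.univ \ C).biUnion (fun v => G.neighborFinset v))
    (hπsub : ∀ v ∈ Finset.univ \ C, π v ⊆ C ∩ G.neighborFinset v)
    (hdisj₀ : ∀ v ∈ Finset.univ \ C, Disjoint π₀ (π v))
    (hdisj : ∀ v ∈ Finset.univ \ C, ∀ w ∈ Finset.univ \ C, v ≠ w → Disjoint (π v) (π w)) :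
    ∀ D : Finset V, D ⊆ C → DegBoundedAfterDeletion G d D →
      (C.card : ℤ) - (π₀.card : ℤ) -
        (∑ v ∈ Finset.univ \ C,
          min ((d : ℤ) - (((Finset.univ \ C) ∩ G.neighborFinset v).card : ℤ))
            (((π v).card : ℤ))) ≤ (D.card : ℤ) := by
  intro D hD hbd
  set S : Finset V := Finset.univ \ C with hS
  -- C \ D is covered by (π₀ \ D) and the (π v \ D)
  have hcover : C \ D = (π₀ \ D) ∪ S.biUnion (fun v => π v \ D) := by
    rw [← hunion]
    ext x
    simp only [Finset.mem_sdiff, Finset.mem_union, Finset.mem_biUnion]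
    tauto
  have h1 : (C \ D).card ≤ π₀.card + ∑ v ∈ S, (π v \ D).card := by
    rw [hcover]
    calc ((π₀ \ D) ∪ S.biUnion (fun v => π v \ D)).card
        ≤ (π₀ \ D).card + (S.biUnion (fun v => π v \ D)).card :=
          Finset.card_union_le _ _
      _ ≤ π₀.card + ∑ v ∈ S, (π v \ D).card :=
          Nat.add_le_add (Finset.card_le_card Finset.sdiff_subset) Finset.card_biUnion_le
  -- each piece is small
  have h2 : ∀ v ∈ S, ((π v \ D).card : ℤ) ≤
      min ((d : ℤ) - ((S ∩ G.neighborFinset v).card : ℤ)) (((π v).card : ℤ)) := by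
    intro v hv
    refine le_min ?_ ?_
    · have hvD : v ∉ D := fun h => by
        have := Finset.mem_sdiff.mp hv
        exact this.2 (hD h)
      have hb : ((Finset.univ \ D).filter (fun w => G.Adj v w)).card ≤ d := by
        convert hbd v hvD using 2
        ext x; simp
      have hsub1 : π v \ D ⊆ (Finset.univ \ D).filter (fun w => G.Adj v w) := by
        intro x hx
        have hx' := Finset.mem_sdiff.mp hx
        have hπx := hπsub v hv hx'.1
        have := Finset.mem_inter.mp hπx
        simp only [Finset.mem_filter, Finset.mem_sdiff, Finset.mem_univ, true_and]
        exact ⟨hx'.2, (SimpleGraph.mem_neighborFinset _ _ _).mp this.2⟩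
      have hsub2 : S ∩ G.neighborFinset v ⊆ (Finset.univ \ D).filter (fun w => G.Adj v w) := by
        intro x hx
        have hx' := Finset.mem_inter.mp hx
        have hxC := (Finset.mem_sdiff.mp hx'.1).2
        simp only [Finset.mem_filter, Finset.mem_sdiff, Finset.mem_univ, true_and]
        exact ⟨fun h => hxC (hD h), (SimpleGraph.mem_neighborFinset _ _ _).mp hx'.2⟩
      have hdisjvs : Disjoint (π v \ D) (S ∩ G.neighborFinset v) := by
        apply Finset.disjoint_left.mpr
        intro x hx hx'
        have hxC := (Finset.mem_inter.mp (hπsub v hv (Finset.mem_sdiff.mp hx).1)).1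
        exact (Finset.mem_sdiff.mp (Finset.mem_inter.mp hx').1).2 hxC
      have hun : (π v \ D).card + (S ∩ G.neighborFinset v).card ≤ d := by
        rw [← Finset.card_union_of_disjoint hdisjvs]
        exact le_trans (Finset.card_le_card (Finset.union_subset hsub1 hsub2)) hb
      have := (Nat.cast_le (α := ℤ)).mpr hun
      push_cast at this ⊢
      linarith
    · exact_mod_cast Finset.card_le_card (Finset.sdiff_subset)
  have h3 : ∑ v ∈ S, ((π v \ D).card : ℤ) ≤
      ∑ v ∈ S, min ((d : ℤ) - ((S ∩ G.neighborFinset v).card : ℤ)) (((π v).card : ℤ)) :=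
    Finset.sum_le_sum h2
  have hcd : ((C \ D).card : ℤ) = (C.card : ℤ) - D.card := by
    rw [Finset.card_sdiff_of_subset hD]
    exact_mod_cast Nat.cast_sub (Finset.card_le_card hD)
  have h1' : ((C \ D).card : ℤ) ≤ (π₀.card : ℤ) + ∑ v ∈ S, ((π v \ D).card : ℤ) := by
    exact_mod_cast h1
  linarith
end

section
/- Let G be a simple graph, k a positive integer, and P a k-plex of G with |P| ≥ 2k - 1. Then for every vertex v ∈ P, P ⊆ {v} ∪ N_G(v) ∪ N_G^2(v), where N_G^2(v) denotes the 2-hop neighbors of v in G. -/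
open scoped Classical

/-- If `P` is a `k`-plex with `|P| ≥ 2k - 1`, then for every `v ∈ P` we have
`P ⊆ {v} ∪ N_G(v) ∪ N_G²(v)`. -/
theorem kplex_subset_closed_two_hop {V : Type*} (G : SimpleGraph V)
    (k : ℕ) (hk : 0 < k) (P : Finset V) (hP : IsKPlex G k P)
    (hcard : 2 * k - 1 ≤ P.card) :
    ∀ v ∈ P, (↑P : Set V) ⊆ {v} ∪ G.neighborSet v ∪ twoHop G v := by
  intro v hv w hw
  simp only [Finset.mem_coe] at hw
  by_cases hwv : w = v
  · left; left; simp [hwv]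
  by_cases hadj : G.Adj v w
  · left; right; exact hadj
  -- find common neighbor
  have hvP := hP v hv
  have hwP := hP w hw
  set A := P.filter (fun u => G.Adj v u) with hA
  set B := P.filter (fun u => G.Adj w u) with hB
  have hsub : A ∪ B ⊆ (P.erase v).erase w := by
    intro x hx
    rw [Finset.mem_union, hA, hB, Finset.mem_filter, Finset.mem_filter] at hx
    simp only [Finset.mem_erase]
    rcases hx with ⟨hxP, hadj'⟩ | ⟨hxP, hadj'⟩
    · exact ⟨fun h => hadj (h ▸ hadj'), fun h => G.loopless.irrefl v (h ▸ hadj'), hxP⟩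
    · exact ⟨fun h => G.loopless.irrefl w (h ▸ hadj'), fun h => hadj (h ▸ hadj').symm, hxP⟩
  have hcard2 : ((P.erase v).erase w).card = P.card - 2 := by
    rw [Finset.card_erase_of_mem (Finset.mem_erase.mpr ⟨hwv, hw⟩),
      Finset.card_erase_of_mem hv]
    omega
  have hcardP : 1 < P.card := Finset.one_lt_card.mpr ⟨v, hv, w, hw, fun h => hwv h.symm⟩
  have hAB : 0 < (A ∩ B).card := by
    have h1 : (A ∪ B).card ≤ P.card - 2 := hcard2 ▸ Finset.card_le_card hsub
    have h2 := Finset.card_union_add_card_inter A B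
    have hA' : A.card ≤ P.card := Finset.card_le_card (Finset.filter_subset _ _)
    have hB' : B.card ≤ P.card := Finset.card_le_card (Finset.filter_subset _ _)
    omega
  obtain ⟨u, hu⟩ := Finset.card_pos.mp hAB
  rw [Finset.mem_inter, hA, hB, Finset.mem_filter, Finset.mem_filter] at hu
  right
  refine ⟨?_, ?_⟩
  · simp only [Set.mem_iUnion, SimpleGraph.mem_neighborSet]
    exact ⟨u, hu.1.2, hu.2.2.symm⟩
  · intro hmem
    rcases hmem with hmem | hmem
    · exact hadj hmem
    · exact hwv hmem
end
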